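/- Lower mass bound for shifted balls. Let n ≥ 1 be an integer and d a real with n ≤ d < ∞. Let V : ℝⁿ → ℝ be continuous with V(x) > −d for all x and Z_{V,d} finite. Let 0 < R < ∞, set s = max{R, √d}, and let ω_n be the Lebesgue volume of the unit ball in ℝⁿ. Then for every x ∈ ℝⁿ with |x| ≤ R and every unit vector u ∈ ℝⁿ: μ_{V,d}(B_{3s}(x + 6s·u)) ≥ ω_n·(3s)ⁿ/( Z_{V,d} · (C⁽⁰⁾_{V,d}(10s))^d ) · (1 + 100s²/d)^{−d}. -/

import Mathlib

open MeasureTheory Metric Set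
open scoped ENNReal RealInnerProductSpace

noncomputable section

/-- Euclidean space `ℝⁿ`. -/
abbrev Euc (n : ℕ) := EuclideanSpace ℝ (Fin n)

/-- The second directional derivative `⟨D²f(x)v, v⟩`. -/
def hess {n : ℕ} (f : Euc n → ℝ) (x v : Euc n) : ℝ :=
  iteratedFDeriv ℝ 2 f x ![v, v]

/-- The normalization constant `Z_{U,p} = ∫ (1 + U(x)/p)^(−p) dx`. -/
def Znorm {n : ℕ} (U : Euc n → ℝ) (p : ℝ) : ℝ :=
  ∫ x, (1 + U x / p) ^ (-p)

/-- The measure `μ_{U,p}` with density `Z_{U,p}⁻¹ (1 + U(x)/p)^(−p)` w.r.t. Lebesgue. -/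
def muUP {n : ℕ} (U : Euc n → ℝ) (p : ℝ) : Measure (Euc n) :=
  volume.withDensity fun x => ENNReal.ofReal ((Znorm U p)⁻¹ * (1 + U x / p) ^ (-p))

/-- The ratio `(p + U(x))/(p + |x|²)`. -/
def ratio0 {n : ℕ} (U : Euc n → ℝ) (p : ℝ) (x : Euc n) : ℝ :=
  (p + U x) / (p + ‖x‖ ^ 2)

/-- The ratio `|∇U(x)|²/(√p + |x|)²`. -/
def ratio1 {n : ℕ} (U : Euc n → ℝ) (p : ℝ) (x : Euc n) : ℝ :=
  ‖gradient U x‖ ^ 2 / (Real.sqrt p + ‖x‖) ^ 2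

/-- `c⁽⁰⁾_{U,p}(S) = inf_{x ∈ S} (p + U(x))/(p + |x|²)`. -/
def cLow {n : ℕ} (U : Euc n → ℝ) (p : ℝ) (S : Set (Euc n)) : ℝ := sInf (ratio0 U p '' S)

/-- `C⁽⁰⁾_{U,p}(S) = sup_{x ∈ S} (p + U(x))/(p + |x|²)`. -/
def cUp {n : ℕ} (U : Euc n → ℝ) (p : ℝ) (S : Set (Euc n)) : ℝ := sSup (ratio0 U p '' S)

/-- `C⁽¹⁾_{U,p}(S) = sup_{x ∈ S} |∇U(x)|²/(√p + |x|)²`. -/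
def cGrad {n : ℕ} (U : Euc n → ℝ) (p : ℝ) (S : Set (Euc n)) : ℝ := sSup (ratio1 U p '' S)

/-- The Lebesgue volume of the unit ball in `ℝⁿ`. -/
def unitBallVol (n : ℕ) : ℝ := (volume (ball (0 : Euc n) 1)).toReal

/-- **Lower mass bound for shifted balls.** -/
theorem lower_mass_bound_shifted_balls
    {n : ℕ} (hn : 1 ≤ n) (d : ℝ) (hnd : (n : ℝ) ≤ d)
    (V : Euc n → ℝ) (hVcont : Continuous V) (hVlow : ∀ x, -d < V x)
    (hZV : Integrable fun x : Euc n => (1 + V x / d) ^ (-d))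
    (R : ℝ) (hR : 0 < R) (s : ℝ) (hs : s = max R (Real.sqrt d))
    (x : Euc n) (hx : ‖x‖ ≤ R) (u : Euc n) (hu : ‖u‖ = 1) :
    ENNReal.ofReal (unitBallVol n * (3 * s) ^ n /
        (Znorm V d * cUp V d (ball (0 : Euc n) (10 * s)) ^ d) * (1 + 100 * s ^ 2 / d) ^ (-d))
      ≤ muUP V d (ball (x + (6 * s) • u) (3 * s)) := by
  haveI : Nonempty (Fin n) := ⟨⟨0, hn⟩⟩
  haveI : Nontrivial (Euc n) := by unfold Euc EuclideanSpace PiLp; infer_instance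
  have hd1 : (1:ℝ) ≤ d := le_trans (by exact_mod_cast hn) hnd
  have hd0 : (0:ℝ) < d := lt_of_lt_of_le one_pos hd1
  have hsd : Real.sqrt d ≤ s := hs ▸ le_max_right _ _
  have hRs : R ≤ s := hs ▸ le_max_left _ _
  have hs0 : 0 < s := lt_of_lt_of_le hR hRs
  have hbase : ∀ y : Euc n, 0 < 1 + V y / d := by
    intro y
    have h1 : 0 < (d + V y) / d := div_pos (by linarith [hVlow y]) hd0
    have h2 : (d + V y) / d = 1 + V y / d := by field_simp
    linarith [h2 ▸ h1]
  have hfpos : ∀ y : Euc n, 0 < (1 + V y / d) ^ (-d) :=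
    fun y => Real.rpow_pos_of_pos (hbase y) _
  -- Z > 0
  have hZpos : 0 < Znorm V d := by
    rw [Znorm, integral_pos_iff_support_of_nonneg (fun y => (hfpos y).le) hZV]
    have hsupp : Function.support (fun y : Euc n => (1 + V y / d) ^ (-d)) = Set.univ := by
      ext y; simp [Function.mem_support, (hfpos y).ne']
    rw [hsupp]
    exact Measure.measure_univ_pos.mpr (NeZero.ne volume)
  set C := cUp V d (ball (0 : Euc n) (10 * s)) with hC
  -- boundedness of ratio0 on the ball
  have hden : ∀ y : Euc n, 0 < d + ‖y‖ ^ 2 := fun y => by positivity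
  have hratio_cont : Continuous (ratio0 V d) := by
    apply Continuous.div
    · exact continuous_const.add hVcont
    · exact continuous_const.add ((continuous_norm).pow 2)
    · exact fun y => (hden y).ne'
  have hbdd : BddAbove (ratio0 V d '' ball (0 : Euc n) (10 * s)) := by
    have hc : IsCompact (ratio0 V d '' closedBall (0 : Euc n) (10 * s)) :=
      (isCompact_closedBall _ _).image hratio_cont
    exact hc.bddAbove.mono (image_mono ball_subset_closedBall)
  have hCle : ∀ y ∈ ball (0 : Euc n) (10 * s), ratio0 V d y ≤ C :=
    fun y hy => le_csSup hbdd (mem_image_of_mem _ hy)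
  have h0ball : (0 : Euc n) ∈ ball (0 : Euc n) (10 * s) :=
    mem_ball_self (by positivity)
  have hCpos : 0 < C := by
    have := hCle 0 h0ball
    refine lt_of_lt_of_le ?_ this
    rw [ratio0]
    have : 0 < d + V 0 := by linarith [hVlow 0]
    positivity
  -- ball inclusion
  have hsub : ball (x + (6 * s) • u) (3 * s) ⊆ ball (0 : Euc n) (10 * s) := by
    intro y hy
    rw [mem_ball, dist_eq_norm] at hy ⊢
    have h6 : ‖(6 * s) • u‖ = 6 * s := by
      rw [norm_smul, hu, mul_one, Real.norm_eq_abs, abs_of_pos (by positivity)]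
    have : ‖y - 0‖ ≤ ‖y - (x + (6 * s) • u)‖ + ‖x‖ + ‖(6 * s) • u‖ := by
      have := norm_sub_le (y - (x + (6 * s) • u)) (-(x + (6 * s) • u))
      calc ‖y - 0‖ = ‖(y - (x + (6 * s) • u)) + (x + (6 * s) • u)‖ := by
              rw [sub_zero, sub_add_cancel]
        _ ≤ ‖y - (x + (6 * s) • u)‖ + ‖x + (6 * s) • u‖ := norm_add_le _ _
        _ ≤ ‖y - (x + (6 * s) • u)‖ + (‖x‖ + ‖(6 * s) • u‖) := by
            linarith [norm_add_le x ((6 * s) • u)]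
        _ = _ := by ring
    calc ‖y - 0‖ ≤ ‖y - (x + (6 * s) • u)‖ + ‖x‖ + ‖(6 * s) • u‖ := this
      _ < 3 * s + s + 6 * s := by
          rw [h6]
          have hxs : ‖x‖ ≤ s := le_trans hx hRs
          -- need strict: from hy (< 3s) plus hxs and equality
          linarith
      _ = 10 * s := by ring
  -- pointwise lower bound inside the ball
  set X : ℝ := (1 + 100 * s ^ 2 / d) ^ (-d) with hX
  have hXpos : 0 < X := Real.rpow_pos_of_pos (by positivity) _
  have hpt : ∀ y ∈ ball (x + (6 * s) • u) (3 * s),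
      C ^ (-d) * X ≤ (1 + V y / d) ^ (-d) := by
    intro y hy
    have hy' := hsub hy
    have hnorm : ‖y‖ < 10 * s := by simpa [mem_ball, dist_eq_norm] using hy'
    have hsq : ‖y‖ ^ 2 ≤ 100 * s ^ 2 := by
      have : ‖y‖ ^ 2 ≤ (10 * s) ^ 2 := by
        apply sq_le_sq' <;> nlinarith [norm_nonneg y]
      linarith [this, sq_nonneg s]
    have hr := hCle y hy'
    rw [ratio0, div_le_iff₀ (hden y)] at hr
    have hb : 1 + V y / d ≤ C * (1 + 100 * s ^ 2 / d) := by
      have h2 : d + V y ≤ C * (d + 100 * s ^ 2) := by nlinarith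
      have h3 : (1 + V y / d) * d ≤ (C * (1 + 100 * s ^ 2 / d)) * d := by
        field_simp
        nlinarith
      exact le_of_mul_le_mul_right h3 hd0
    have := Real.rpow_le_rpow_of_nonpos (hbase y) hb (by linarith : -d ≤ 0)
    calc C ^ (-d) * X = (C * (1 + 100 * s ^ 2 / d)) ^ (-d) := by
          rw [Real.mul_rpow hCpos.le (by positivity)]
      _ ≤ (1 + V y / d) ^ (-d) := this
  -- compute the measure lower bound
  set B := ball (x + (6 * s) • u) (3 * s) with hB
  have hmeas : muUP V d B = ∫⁻ y in B, ENNReal.ofReal ((Znorm V d)⁻¹ * (1 + V y / d) ^ (-d)) := by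
    rw [muUP, withDensity_apply _ measurableSet_ball]
  have hvolB : volume B = ENNReal.ofReal ((3 * s) ^ n) * volume (ball (0 : Euc n) 1) := by
    rw [hB, Measure.addHaar_ball volume _ (by positivity : (0:ℝ) ≤ 3 * s)]
    congr 2
    rw [finrank_euclideanSpace_fin]
  have hvol1 : volume (ball (0 : Euc n) 1) = ENNReal.ofReal (unitBallVol n) := by
    rw [unitBallVol, ENNReal.ofReal_toReal measure_ball_lt_top.ne]
  have hlow : ENNReal.ofReal ((Znorm V d)⁻¹ * (C ^ (-d) * X)) * volume B ≤ muUP V d B := by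
    rw [hmeas, ← setLIntegral_const B _]
    apply setLIntegral_mono
    · have hcont : Continuous fun y : Euc n => (1 + V y / d) ^ (-d) :=
        (continuous_const.add (hVcont.div_const d)).rpow_const
          (fun y => Or.inl (hbase y).ne')
      exact ENNReal.measurable_ofReal.comp ((continuous_const.mul hcont).measurable)
    · intro y hy
      apply ENNReal.ofReal_le_ofReal
      have := hpt y hy
      have hZinv : 0 ≤ (Znorm V d)⁻¹ := inv_nonneg.mpr hZpos.le
      nlinarith [hfpos y]
  refine le_trans ?_ hlow
  rw [hvolB, hvol1, ← ENNReal.ofReal_mul (by positivity), ← ENNReal.ofReal_mul (by positivity)]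
  apply ENNReal.ofReal_le_ofReal
  have hCd : C ^ (-d) = (C ^ d)⁻¹ := by
    rw [Real.rpow_neg hCpos.le]
  rw [hCd]
  have hCdpos : 0 < C ^ d := Real.rpow_pos_of_pos hCpos _
  rw [div_eq_mul_inv, mul_inv]
  exact le_of_eq (by ring)
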